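/- Let C ≥ 6 be a real number, let ℓ' and ℓ be integers with 0 ≤ ℓ' ≤ ℓ, and let a, b, d, d' be positive real numbers with b ≤ a, d ≤ d', and d ≤ 2b. Then 2^ℓ · a² · exp(−C · 2^ℓ · √(a/d)) ≤ 2^(ℓ') · b² · exp(−C · 2^(ℓ') · √(b/d')). -/

import Mathlib

/-- For a real `C ≥ 6`, integers `0 ≤ ℓ' ≤ ℓ` and positive
reals `a, b, d, d'` with `b ≤ a`, `d ≤ d'` and `d ≤ 2b`, we have
`2^ℓ·a²·exp(−C·2^ℓ·√(a/d)) ≤ 2^{ℓ'}·b²·exp(−C·2^{ℓ'}·√(b/d'))`. -/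
theorem nested_component_cost_bound (C : ℝ) (hC : 6 ≤ C)
    (ℓ' ℓ : ℤ) (hℓ' : 0 ≤ ℓ') (hℓ : ℓ' ≤ ℓ)
    (a b d d' : ℝ) (ha : 0 < a) (hb : 0 < b) (hd : 0 < d) (hd' : 0 < d')
    (hba : b ≤ a) (hdd' : d ≤ d') (hd2b : d ≤ 2 * b) :
    (2 : ℝ) ^ ℓ * a ^ 2 * Real.exp (-C * 2 ^ ℓ * Real.sqrt (a / d)) ≤
      (2 : ℝ) ^ ℓ' * b ^ 2 * Real.exp (-C * 2 ^ ℓ' * Real.sqrt (b / d')) := by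
  -- sqrt basics
  have hsb : 0 < Real.sqrt b := Real.sqrt_pos.mpr hb
  have hsab : Real.sqrt b ≤ Real.sqrt a := Real.sqrt_le_sqrt hba
  have hs2pos : (0:ℝ) < Real.sqrt 2 := Real.sqrt_pos.mpr two_pos
  have hs2le : Real.sqrt 2 ≤ 3/2 := by
    nlinarith [Real.sq_sqrt (by norm_num : (0:ℝ) ≤ 2), Real.sqrt_nonneg 2]
  set x := Real.sqrt (a/d) with hxdef
  set y := Real.sqrt (b/d') with hydef
  set s : ℝ := (2:ℝ)^ℓ with hsdef
  set s' : ℝ := (2:ℝ)^ℓ' with hs'def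
  set u : ℝ := Real.sqrt a / Real.sqrt b - 1 with hudef
  -- facts about s, s'
  have hs'pos : (0:ℝ) < s' := zpow_pos two_pos _
  have hspos : (0:ℝ) < s := zpow_pos two_pos _
  have hs'1 : (1:ℝ) ≤ s' := one_le_zpow₀ (by norm_num) hℓ'
  have hss' : s' ≤ s := zpow_le_zpow_right₀ (by norm_num) hℓ
  obtain ⟨n, hn⟩ : ∃ n : ℕ, ℓ = ℓ' + n := ⟨(ℓ - ℓ').toNat, by omega⟩
  have hsn : s = s' * 2^n := by
    rw [hsdef, hs'def, ← zpow_natCast (2:ℝ) n, ← zpow_add₀ (two_ne_zero) ℓ' (n:ℤ)]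
    rw [show ℓ' + (n:ℤ) = ℓ from hn.symm]
  clear_value s s'
  -- facts about x, y
  have hx : (1/2 : ℝ) ≤ x := by
    have had : (1/4 : ℝ) ≤ a / d := by rw [le_div_iff₀ hd]; nlinarith
    rw [hxdef, show (1/2:ℝ) = Real.sqrt (1/4) by
      rw [show (1/4:ℝ) = (1/2)^2 by norm_num, Real.sqrt_sq (by norm_num)]]
    exact Real.sqrt_le_sqrt had
  have hx0 : (0:ℝ) ≤ x := Real.sqrt_nonneg _
  have hu : 0 ≤ u := by
    rw [hudef, le_sub_iff_add_le, zero_add, le_div_iff₀ hsb, one_mul]; exact hsab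
  have hab : a = b * (1+u)^2 := by
    have h1 : (1 + u) = Real.sqrt a / Real.sqrt b := by rw [hudef]; ring
    have h2 : (1+u)^2 = a / b := by
      rw [h1, div_pow, Real.sq_sqrt ha.le, Real.sq_sqrt hb.le]
    rw [h2]; field_simp
  have hxy : u / Real.sqrt 2 ≤ x - y := by
    have hy_le : y ≤ Real.sqrt (b/d) := Real.sqrt_le_sqrt
      (div_le_div_of_nonneg_left hb.le hd hdd')
    have hxd : x = Real.sqrt a / Real.sqrt d := by rw [hxdef, Real.sqrt_div ha.le]
    have hbd : Real.sqrt (b/d) = Real.sqrt b / Real.sqrt d := Real.sqrt_div hb.le _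
    have hsd : 0 < Real.sqrt d := Real.sqrt_pos.mpr hd
    have hd2b' : Real.sqrt d ≤ Real.sqrt 2 * Real.sqrt b := by
      rw [← Real.sqrt_mul (by norm_num : (0:ℝ) ≤ 2)]
      exact Real.sqrt_le_sqrt hd2b
    have key : u / Real.sqrt 2 ≤ (Real.sqrt a - Real.sqrt b) / Real.sqrt d := by
      rw [div_le_div_iff₀ hs2pos hsd, hudef]
      have h1 : (Real.sqrt a / Real.sqrt b - 1) * Real.sqrt d
          = (Real.sqrt a - Real.sqrt b) * (Real.sqrt d / Real.sqrt b) := by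
        field_simp
      rw [h1]
      apply mul_le_mul_of_nonneg_left _ (by linarith)
      rw [div_le_iff₀ hsb]
      nlinarith
    calc u / Real.sqrt 2 ≤ (Real.sqrt a - Real.sqrt b) / Real.sqrt d := key
      _ = Real.sqrt a / Real.sqrt d - Real.sqrt b / Real.sqrt d := by ring
      _ ≤ x - y := by rw [hxd]; gcongr; · rw [← hbd]; exact hy_le
  have hxy0 : 0 ≤ x - y := le_trans (div_nonneg hu hs2pos.le) hxy
  clear_value x y u
  clear hxdef hydef hudef hsdef hs'def
  -- claim A
  have hA : s ≤ s' * Real.exp (C * (s - s') * x) := by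
    have hp1 : (1:ℝ) ≤ 2^n := one_le_pow₀ (by norm_num)
    have hn2 : (n:ℝ) ≤ 2^n - 1 := by
      have h := Nat.lt_two_pow_self (n := n)
      have h' : (n:ℝ) + 1 ≤ 2^n := by exact_mod_cast h
      linarith
    have hss : (n:ℝ) ≤ s - s' := by
      have h := mul_le_mul_of_nonneg_right hs'1 (by linarith : (0:ℝ) ≤ 2^n - 1)
      have h1 : (2:ℝ)^n - 1 ≤ s' * (2^n - 1) := by linarith
      linarith [hsn, h1, hn2]
    have h2n : (2:ℝ)^n ≤ Real.exp n := by
      calc (2:ℝ)^n = Real.exp (Real.log 2) ^ n := by rw [Real.exp_log two_pos]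
        _ = Real.exp (n * Real.log 2) := (Real.exp_nat_mul _ n).symm
        _ ≤ Real.exp n := by
            apply Real.exp_le_exp.mpr
            have hlog : Real.log 2 ≤ 1 := by linarith [Real.log_le_sub_one_of_pos two_pos]
            exact mul_le_of_le_one_right (Nat.cast_nonneg n) hlog
    have hexp : Real.exp (n:ℝ) ≤ Real.exp (C * (s - s') * x) := by
      apply Real.exp_le_exp.mpr
      have hCx : (1:ℝ) ≤ C * x := by
        have h3 := mul_le_mul hC hx (by norm_num : (0:ℝ) ≤ 1/2) (by linarith : (0:ℝ) ≤ C)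
        linarith
      calc (n:ℝ) ≤ s - s' := hss
        _ ≤ (s - s') * (C * x) := le_mul_of_one_le_right (sub_nonneg.mpr hss') hCx
        _ = C * (s - s') * x := by ring
    calc s = s' * 2^n := hsn
      _ ≤ s' * Real.exp n := by gcongr
      _ ≤ s' * Real.exp (C * (s - s') * x) := by gcongr
  -- claim B
  have hB : a^2 ≤ b^2 * Real.exp (C * s' * (x - y)) := by
    have h4u : 4*u ≤ C * s' * (x - y) := by
      have h1 : 2*u/3 ≤ u / Real.sqrt 2 := by
        rw [div_le_div_iff₀ (by norm_num) hs2pos]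
        linarith [mul_nonneg hu (sub_nonneg.mpr hs2le)]
      have h6 : (6:ℝ) ≤ C * s' :=
        le_trans hC (le_mul_of_one_le_right (by linarith) hs'1)
      calc 4*u = 6 * (2*u/3) := by ring
        _ ≤ 6 * (x - y) := by linarith [h1.trans hxy]
        _ ≤ C * s' * (x - y) := mul_le_mul_of_nonneg_right h6 hxy0
    have hpow : (1+u)^4 ≤ Real.exp u ^ 4 :=
      pow_le_pow_left₀ (by linarith) (by linarith [Real.add_one_le_exp u]) 4
    have hexp4 : Real.exp u ^ 4 = Real.exp (4*u) := by
      rw [← Real.exp_nat_mul]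
      norm_num
    calc a^2 = b^2 * (1+u)^4 := by rw [hab]; ring
      _ ≤ b^2 * Real.exp u ^ 4 := by gcongr
      _ = b^2 * Real.exp (4*u) := by rw [hexp4]
      _ ≤ b^2 * Real.exp (C * s' * (x - y)) := by gcongr
  calc s * a^2 * Real.exp (-C * s * x)
      ≤ (s' * Real.exp (C * (s - s') * x)) * (b^2 * Real.exp (C * s' * (x - y)))
          * Real.exp (-C * s * x) := by
        apply mul_le_mul_of_nonneg_right _ (Real.exp_pos _).le
        exact mul_le_mul hA hB (sq_nonneg a) (by positivity)
    _ = s' * b^2 * Real.exp (C * (s - s') * x + (C * s' * (x - y)) + (-C * s * x)) := by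
        rw [Real.exp_add, Real.exp_add]; ring
    _ = s' * b^2 * Real.exp (-C * s' * y) := by
        rw [show C * (s - s') * x + (C * s' * (x - y)) + (-C * s * x) = -C * s' * y by ring]
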